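/- Let p ∈ (0,1) and define F(x,y) = p·x·log_p(x) + (1-p)·y·log_p(y) + p·x - p·y and G(x,y) = (p·x + (1-p)·y)·log_p(p·x + (1-p)·y) for x, y ∈ [0,1], with the convention 0·log_p(0) = 0. Then for all x ≥ y ≥ 0 (with x, y ≤ 1), F(x,y) ≥ G(x,y). -/

import Mathlib

lemma log_concave_pt (p : ℝ) (hp : 0 < p) {a b : ℝ} (ha : 0 ≤ a) (hb : 0 ≤ b)
    (hab : a + b = 1) : a * Real.log p ≤ Real.log (a * p + b) := by
  have h := strictConcaveOn_log_Ioi.concaveOn.2 (Set.mem_Ioi.mpr hp)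
    (Set.mem_Ioi.mpr one_pos) ha hb hab
  simpa using h

theorem F_ge_G (p : ℝ) (hp : 0 < p) (hp1 : p < 1)
    (F G : ℝ → ℝ → ℝ)
    (hF : ∀ x y, F x y = p * x * (Real.log x / Real.log p)
      + (1 - p) * y * (Real.log y / Real.log p) + p * x - p * y)
    (hG : ∀ x y, G x y = (p * x + (1 - p) * y) *
      (Real.log (p * x + (1 - p) * y) / Real.log p))
    (x y : ℝ) (hy : 0 ≤ y) (hxy : y ≤ x) (hx1 : x ≤ 1) :
    F x y ≥ G x y := by
  rw [hF, hG]
  have hL : Real.log p < 0 := Real.log_neg hp hp1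
  set L := Real.log p with hLdef
  rcases eq_or_lt_of_le (hy.trans hxy) with hx0 | hx0
  · -- x = 0, hence y = 0
    have hx : x = 0 := hx0.symm
    have hy0 : y = 0 := le_antisymm (hxy.trans_eq hx) hy
    subst hx; subst hy0
    simp
  · -- x > 0
    set s := p * x + (1 - p) * y with hsdef
    have hs : 0 < s := by nlinarith
    -- key concavity inequality
    have hkey : (x - y) * L ≤ x * (Real.log s - Real.log x) := by
      have ha : 0 ≤ (x - y) / x := div_nonneg (by linarith) hx0.le
      have hb : 0 ≤ y / x := by positivity
      have hab : (x - y) / x + y / x = 1 := by field_simp; ring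
      have h := log_concave_pt p hp ha hb hab
      have heq : (x - y) / x * p + y / x = s / x := by field_simp; ring
      rw [heq, Real.log_div hs.ne' hx0.ne'] at h
      calc (x - y) * L = ((x - y) / x * L) * x := by field_simp
        _ ≤ (Real.log s - Real.log x) * x := by
            exact mul_le_mul_of_nonneg_right h hx0.le
        _ = x * (Real.log s - Real.log x) := by ring
    have h2 : 0 ≤ y * (Real.log s - Real.log y) := by
      rcases eq_or_lt_of_le hy with h | h
      · simp [← h]
      · have hys : y ≤ s := by nlinarith
        have := Real.log_le_log h hys
        nlinarith
    have hstar : p * x * Real.log x + (1 - p) * y * Real.log y + p * (x - y) * L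
        ≤ s * Real.log s := by
      have hss : s * Real.log s = p * x * Real.log s + (1 - p) * y * Real.log s := by
        rw [hsdef]; ring
      nlinarith [mul_le_mul_of_nonneg_left hkey hp.le,
        mul_nonneg (by linarith : (0:ℝ) ≤ 1 - p) h2]
    have hLne : L ≠ 0 := ne_of_lt hL
    have h3 : s * Real.log s / L
        ≤ (p * x * Real.log x + (1 - p) * y * Real.log y + p * (x - y) * L) / L :=
      div_le_div_of_nonpos_of_le hL.le hstar
    have h4 : (p * x * Real.log x + (1 - p) * y * Real.log y + p * (x - y) * L) / L
        = p * x * (Real.log x / L) + (1 - p) * y * (Real.log y / L) + p * x - p * y := by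
      field_simp
      ring
    rw [h4, mul_div_assoc] at h3
    linarith
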